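/- Let n > n_ex ≥ 2 be integers, s ≥ 2, 1/s < p_ex ≤ 1, r = (s/(s-1))·(p_ex - 1/s)^2 + 1/s, δ = (p_ex - 1/s)^2 / n^2, and ρ = (C(n,2) - C(n_ex,2))·(1/s) + C(n_ex,2)·r. Then r - ρ/C(n,2) > 2δ. -/
import Mathlib

set_option maxHeartbeats 1000000


/-- Separation of r above the average agreement probability ρ/C(n,2). -/
theorem stmt4 (n nex s : ℕ) (h1 : 2 ≤ nex) (h2 : nex < n) (hs : 2 ≤ s)
    (pex : ℝ) (hp : 1 / (s : ℝ) < pex) (hp1 : pex ≤ 1)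
    (r δ ρ : ℝ)
    (hr : r = ((s : ℝ) / ((s : ℝ) - 1)) * (pex - 1 / s) ^ 2 + 1 / s)
    (hδ : δ = (pex - 1 / s) ^ 2 / (n : ℝ) ^ 2)
    (hρ : ρ = ((n.choose 2 : ℝ) - (nex.choose 2 : ℝ)) * (1 / s) + (nex.choose 2 : ℝ) * r) :
    r - ρ / (n.choose 2 : ℝ) > 2 * δ := by
  have hs2 : (2:ℝ) ≤ (s:ℝ) := by exact_mod_cast hs
  have hs1 : (0:ℝ) < (s:ℝ) - 1 := by linarith
  have hs0 : (0:ℝ) < (s:ℝ) := by linarith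
  have hq : 0 < (pex - 1/(s:ℝ))^2 := pow_pos (by linarith) 2
  have hn3 : (3:ℝ) ≤ (n:ℝ) := by exact_mod_cast (by omega : 3 ≤ n)
  have hNcast : ((n.choose 2 : ℕ) : ℝ) = n*((n:ℝ)-1)/2 := Nat.cast_choose_two ℝ n
  have hMcast : ((nex.choose 2 : ℕ) : ℝ) = nex*((nex:ℝ)-1)/2 := Nat.cast_choose_two ℝ nex
  have hnex : (nex:ℝ) ≤ (n:ℝ) - 1 := by
    have : (nex:ℝ) + 1 ≤ (n:ℝ) := by exact_mod_cast h2
    linarith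
  have hnex2 : (2:ℝ) ≤ (nex:ℝ) := by exact_mod_cast h1
  have hNpos : (0:ℝ) < (n.choose 2 : ℝ) := by rw [hNcast]; nlinarith
  have hNM : (n:ℝ) - 1 ≤ (n.choose 2:ℝ) - (nex.choose 2:ℝ) := by
    rw [hNcast, hMcast]; nlinarith
  have key : r - ρ / (n.choose 2:ℝ) =
      (((n.choose 2:ℝ) - (nex.choose 2:ℝ)) * ((s:ℝ) * (pex - 1/(s:ℝ))^2)) /
        (((s:ℝ)-1) * (n.choose 2:ℝ)) := by
    rw [hρ, hr]; field_simp; ring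
  rw [key, hδ, gt_iff_lt, mul_div_assoc']
  rw [div_lt_div_iff₀ (by positivity) (by positivity)]
  have hn1 : (0:ℝ) < (n:ℝ) - 1 := by linarith
  have hfac : (0:ℝ) < ((n:ℝ)-1)*(n:ℝ)*((s:ℝ)*(n:ℝ) - (s:ℝ) + 1) :=
    mul_pos (mul_pos hn1 (by linarith)) (by nlinarith [mul_pos hs0 hn1])
  have h5 : ((n:ℝ)-1) * ((s:ℝ) * (pex - 1/(s:ℝ))^2 * (n:ℝ)^2) >
      2*(pex - 1/(s:ℝ))^2*(((s:ℝ)-1)*(n.choose 2:ℝ)) := by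
    rw [hNcast]; linarith [mul_pos hq hfac]
  have h6 : ((n:ℝ)-1) * ((s:ℝ) * (pex - 1/(s:ℝ))^2 * (n:ℝ)^2) ≤
      ((n.choose 2:ℝ) - (nex.choose 2:ℝ)) * ((s:ℝ) * (pex - 1/(s:ℝ))^2 * (n:ℝ)^2) :=
    mul_le_mul_of_nonneg_right hNM (by positivity)
  linarith [h5, h6]
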